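/- (Corollary 3.) Fix N, the complex data f_1,…,f_K and b_{ki}, and all real parameters except the powers, and for fixed E_u > 0 set p_i = E_u/M for every i. Define Γ_k = τ²ι²κ²β²α_k²·c_{k,1}/((δ+1)²(μ_k+1)²) and, for i ≠ k, Γ_ki = τ²ι²κ²β²α_kα_i·z_{ki,1}/((δ+1)²(μ_k+1)(μ_i+1)). Then as M → ∞ the closed-form rate converges: R̃_k → log₂(1 + E_uΓ_k/(Σ_{i≠k} E_uΓ_ki + (σ_RF²+σ²)τϖ_k)). -/

import Mathlib

open MeasureTheory ProbabilityTheory Filter Finset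

noncomputable section
/-- Coefficient `c_{k,1}`. -/
def ck1 (N : ℕ) (μk δ ρ : ℝ) (fk : ℂ) : ℝ :=
  (ρ^2*(μk+δ+1)^2 + (1-ρ^2)*δ^2*μk + δ^2) * (N:ℝ)^2
  + (((2*μk+3*δ+2-δ*μk)*ρ^2 + (1+μk)*δ) * δ*μk*(‖fk‖)^2
     + (μk+δ+2)^2 - ρ^2*(μk+δ+1)^2 - 2*ρ^2*δ*μk - 2) * (N:ℝ)
  + ρ^2*δ^2*μk^2*(‖fk‖)^4 + 2*((1-ρ^2)*(μk+δ)+2)*δ*μk*(‖fk‖)^2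

/-- Coefficient `c_{k,2}`. -/
def ck2 (μk δ ρ ι : ℝ) : ℝ :=
  ((1-ι^2)*(μk+δ+1)^2 - δ*μk*(μk+1+δ-ι^2*δ))*ρ^2 + (δ+μk+1)*δ*μk + (μk+δ+1)^2
  - (μk+1)*ι^2*δ^2

/-- Coefficient `c_{k,3}`. -/
def ck3 (μk δ ρ ι : ℝ) (fk : ℂ) : ℝ :=
  (((3-2*ι^2)*(μk+1) + (ι^2-1)*δ*(μk-3))*ρ^2 + (δ+1-ι^2*δ)*(μk+1)) * δ*μk*(‖fk‖)^2
  + ((ι^2-1)*(μk+δ+1)^2 + 2*(ι^2-2)*μk*δ)*ρ^2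
  + (1-ι^2)*(μk+δ+2)^2 + 2*μk*δ + 2*μk + 2*δ - 1 - 2*ι^2

/-- Coefficient `c_{k,4}`. -/
def ck4 (μk δ ρ ι : ℝ) (fk : ℂ) : ℝ :=
  (1-ι^2)*ρ^2*δ^2*μk^2*(‖fk‖)^4
  + 2*δ*μk*(‖fk‖)^2*((1-ι^2)*(1-ρ^2)*(μk+δ+1) + (2-ι^2)*(1+ρ^2))

/-- The closed-form second moment `ξ_k`. -/
def xiK (M N : ℕ) (αk μk β δ ρ ι κ : ℝ) (fk : ℂ) : ℝ :=
  (β^2*αk^2*κ^2*(M:ℝ)/((δ+1)^2*(μk+1)^2))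
    * (ck1 N μk δ ρ fk * ι^2 * (M:ℝ) + ck2 μk δ ρ ι * (N:ℝ)^2 + ck3 μk δ ρ ι fk * (N:ℝ)
       + ck4 μk δ ρ ι fk)

/-- Coefficient `z_{ki,1}`. -/
def zki1 (N : ℕ) (μk μi δ ρ : ℝ) (fk fi bki : ℂ) : ℝ :=
  (μi+1-ρ^2*μi)*δ^2*(N:ℝ)^2
  + ((μi+1-ρ^2*μi)*δ^2*μk*(‖fk‖)^2 + ρ^2*δ^2*μi*(‖fi‖)^2
     + (μk+2*δ+1)*(μi+1-ρ^2*μi) + ρ^2*μi) * (N:ℝ)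
  + (2*δ*(‖fi‖)^2 + μk*(‖bki‖)^2
     + 2*δ*μk*((starRingEnd ℂ) fk * fi * (starRingEnd ℂ) bki).re)*ρ^2*μi
  + (ρ^2*δ*μi*(‖fi‖)^2 + 2*μi*(1-ρ^2) + 2)*δ*μk*(‖fk‖)^2

/-- Coefficient `z_{ki,2}`. -/
def zki2 (μk μi δ ρ ι : ℝ) : ℝ :=
  ((δ+1)*μk + (δ+1)^2 - ι^2*δ^2)*(μi+1) - (μk+δ+1-ι^2*δ)*ρ^2*δ*μi - 1

/-- Coefficient `z_{ki,3}`. -/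
def zki3 (μk μi δ ρ ι : ℝ) (fk fi : ℂ) : ℝ :=
  ((1-ι^2)*δ*(μi+1-ρ^2*μi) + μi+1)*δ*μk*(‖fk‖)^2
  + ((μi+1)*(μk+2*δ+1) - (μk+2*δ)*ρ^2*μi)*(1-ι^2)
  + (μk+δ+1-ι^2*δ)*ρ^2*δ*μi*(‖fi‖)^2

/-- Coefficient `z_{ki,4}`. -/
def zki4 (μk μi δ ρ ι : ℝ) (fk fi bki : ℂ) : ℝ :=
  ((δ*(‖fi‖)^2-2)*ρ^2*μi + 2*μi + 2)*(1-ι^2)*δ*μk*(‖fk‖)^2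
  + (1-ι^2)*ρ^2*μk*μi*((‖bki‖)^2
     + 2*δ*((starRingEnd ℂ) fk * fi * (starRingEnd ℂ) bki).re)
  + 2*(1-ι^2)*ρ^2*δ*μi*(‖fi‖)^2

/-- The closed-form interference second moment `γ_{ki}`. -/
def gammaKI (M N : ℕ) (αk αi μk μi β δ ρ ι κ : ℝ) (fk fi bki : ℂ) : ℝ :=
  (κ^2*β^2*αk*αi*(M:ℝ)/((δ+1)^2*(μk+1)*(μi+1)))
    * (zki1 N μk μi δ ρ fk fi bki * ι^2 * (M:ℝ) + zki2 μk μi δ ρ ι * (N:ℝ)^2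
       + zki3 μk μi δ ρ ι fk fi * (N:ℝ) + zki4 μk μi δ ρ ι fk fi bki)

/-- The quantity `ϖ_k`. -/
def varpiK (N : ℕ) (αk μk β δ : ℝ) (fk : ℂ) : ℝ :=
  (β*αk/((δ+1)*(μk+1))) * (δ*μk*(‖fk‖)^2 + (μk+δ+1)*(N:ℝ))

/-- The quantity `ζ`. -/
def zetaV (K N : ℕ) (p α μ : Fin K → ℝ) (β δ ρ κ : ℝ) (f : Fin K → ℂ) : ℝ :=
  ∑ s, (κ^2 * p s * β * α s / ((δ+1)*(μ s + 1)))
    * (ρ^2*δ*(μ s)*(‖f s‖)^2 + ((1-ρ^2)*δ*(μ s) + δ + μ s + 1)*(N:ℝ))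

/-- The closed-form approximate rate `R̃_k`. -/
def Rtilde (K : ℕ) (k : Fin K) (M N : ℕ) (p α μ : Fin K → ℝ)
    (β δ ρ ι κ τ σ2 σRF2 : ℝ) (f : Fin K → ℂ) (b : Fin K → ℂ) : ℝ :=
  Real.logb 2 (1 + p k * τ^2 * xiK M N (α k) (μ k) β δ ρ ι κ (f k) /
    ((∑ i ∈ Finset.univ.erase k,
        p i * τ^2 * gammaKI M N (α k) (α i) (μ k) (μ i) β δ ρ ι κ (f k) (f i) (b i))
     + τ*(1-τ) * varpiK N (α k) (μ k) β δ (f k) * zetaV K N p α μ β δ ρ κ f * (M:ℝ)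
     + τ*(σRF2+σ2) * varpiK N (α k) (μ k) β δ (f k) * (M:ℝ)))

/-- The coefficient `Γ_k` of Corollary 3 / the power scaling law. -/
def GammaK (N : ℕ) (αk μk β δ ρ ι κ τ : ℝ) (fk : ℂ) : ℝ :=
  τ^2*ι^2*κ^2*β^2*αk^2 * ck1 N μk δ ρ fk / ((δ+1)^2*(μk+1)^2)

/-- The coefficient `Γ_{ki}` of Corollary 3 / the power scaling law. -/
def GammaKI (N : ℕ) (αk αi μk μi β δ ρ ι κ τ : ℝ) (fk fi bki : ℂ) : ℝ :=
  τ^2*ι^2*κ^2*β^2*αk*αi * zki1 N μk μi δ ρ fk fi bki / ((δ+1)^2*(μk+1)*(μi+1))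


/-- Auxiliary: nonnegativity of the `c_{k,1}` polynomial. -/
lemma ck1_nonneg (N : ℕ) (μk δ ρ : ℝ) (fk : ℂ) (hμ : 0 < μk) (hδ : 0 < δ)
    (hρ1 : ρ^2 ≤ 1) (hN : 1 ≤ (N:ℝ)) : 0 ≤ ck1 N μk δ ρ fk := by
  have hF0 : (0:ℝ) ≤ ‖fk‖ := norm_nonneg _
  have hn0 : (0:ℝ) ≤ (N:ℝ) := by linarith
  have h1 : 0 ≤ (ρ^2*(μk+δ+1)^2) * ((N:ℝ)^2-(N:ℝ)) :=
    mul_nonneg (by positivity) (by nlinarith)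
  have h2 : 0 ≤ ((1-ρ^2)*(N:ℝ)^2) * (δ^2*μk) :=
    mul_nonneg (mul_nonneg (by linarith) (sq_nonneg _)) (mul_nonneg (sq_nonneg _) hμ.le)
  have h3 : 0 ≤ δ^2*(N:ℝ)^2 := by positivity
  have h4 : 0 ≤ (ρ^2*(‖fk‖)^2*(N:ℝ)) * (δ*μk*(2*μk+3*δ+2)) :=
    mul_nonneg (by positivity) (mul_nonneg (mul_nonneg hδ.le hμ.le) (by linarith))
  have h5 : 0 ≤ (1+μk-ρ^2*μk) * (δ^2*μk*(‖fk‖)^2*(N:ℝ)) :=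
    mul_nonneg (by nlinarith)
      (mul_nonneg (mul_nonneg (mul_nonneg (sq_nonneg δ) hμ.le) (sq_nonneg _)) hn0)
  have h6 : 0 ≤ (μk^2+δ^2+2*(1-ρ^2)*μk*δ+4*μk+4*δ+2) * (N:ℝ) :=
    mul_nonneg (by nlinarith) hn0
  have h7 : 0 ≤ ρ^2*δ^2*μk^2*(‖fk‖)^4 := by positivity
  have h8 : 0 ≤ (2*((1-ρ^2)*(μk+δ)+2)) * (δ*μk*(‖fk‖)^2) :=
    mul_nonneg (by nlinarith) (mul_nonneg (mul_nonneg hδ.le hμ.le) (sq_nonneg _))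
  unfold ck1
  nlinarith [h1, h2, h3, h4, h5, h6, h7, h8]

/-- Auxiliary: nonnegativity of the `z_{ki,1}` polynomial. -/
lemma zki1_nonneg (N : ℕ) (μk μi δ ρ : ℝ) (fk fi bki : ℂ) (hμk : 0 < μk) (hμi : 0 < μi)
    (hδ : 0 < δ) (hρ1 : ρ^2 ≤ 1) (hN : 1 ≤ (N:ℝ)) :
    0 ≤ zki1 N μk μi δ ρ fk fi bki := by
  set F := ‖fk‖ with hFdef
  set I := ‖fi‖ with hIdef
  set B := ‖bki‖ with hBdef
  have hF0 : (0:ℝ) ≤ F := norm_nonneg _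
  have hI0 : (0:ℝ) ≤ I := norm_nonneg _
  have hB0 : (0:ℝ) ≤ B := norm_nonneg _
  have hn0 : (0:ℝ) ≤ (N:ℝ) := by linarith
  have hA : (0:ℝ) ≤ μi+1-ρ^2*μi := by nlinarith
  have habs : |((starRingEnd ℂ) fk * fi * (starRingEnd ℂ) bki).re| ≤ F * I * B := by
    calc |((starRingEnd ℂ) fk * fi * (starRingEnd ℂ) bki).re|
        ≤ ‖(starRingEnd ℂ) fk * fi * (starRingEnd ℂ) bki‖ :=
          Complex.abs_re_le_norm _
      _ = F * I * B := by
          rw [norm_mul, norm_mul, Complex.norm_conj, Complex.norm_conj]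
  have hr : -(F*I*B) ≤ ((starRingEnd ℂ) fk * fi * (starRingEnd ℂ) bki).re :=
    (abs_le.mp habs).1
  have k1 : 0 ≤ (μi+1-ρ^2*μi) * (δ^2*(N:ℝ)^2) := mul_nonneg hA (by positivity)
  have k2a : 0 ≤ (μi+1-ρ^2*μi) * (δ^2*μk*F^2) * (N:ℝ) :=
    mul_nonneg (mul_nonneg hA
      (mul_nonneg (mul_nonneg (sq_nonneg δ) hμk.le) (sq_nonneg F))) hn0
  have k2b : 0 ≤ (ρ^2*δ^2*I^2*(N:ℝ)) * μi := mul_nonneg (by positivity) hμi.le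
  have k2c : 0 ≤ ((μk+2*δ+1) * (μi+1-ρ^2*μi)) * (N:ℝ) :=
    mul_nonneg (mul_nonneg (by linarith) hA) hn0
  have k2d : 0 ≤ (ρ^2*(N:ℝ)) * μi := mul_nonneg (by positivity) hμi.le
  have k3 : 0 ≤ (2*δ*ρ^2*I^2) * μi := mul_nonneg (by positivity) hμi.le
  have k4 : 0 ≤ (ρ^2*μi*μk) * (δ*F*I - B)^2 :=
    mul_nonneg (mul_nonneg (mul_nonneg (sq_nonneg ρ) hμi.le) hμk.le) (sq_nonneg _)
  have k5 : 0 ≤ (2*δ*ρ^2*μi*μk) *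
      (((starRingEnd ℂ) fk * fi * (starRingEnd ℂ) bki).re + F*I*B) := by
    apply mul_nonneg _ (by linarith)
    have : (0:ℝ) ≤ 2*δ*ρ^2 := by positivity
    exact mul_nonneg (mul_nonneg this hμi.le) hμk.le
  have k6 : 0 ≤ (2*μi*(1-ρ^2)+2) * (δ*μk*F^2) :=
    mul_nonneg (by nlinarith) (mul_nonneg (mul_nonneg hδ.le hμk.le) (sq_nonneg F))
  unfold zki1
  rw [← hFdef, ← hIdef, ← hBdef]
  nlinarith [k1, k2a, k2b, k2c, k2d, k3, k4, k5, k6]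

set_option maxHeartbeats 1600000 in
/-- Corollary 3: with `p_i = E_u/M`, as `M → ∞` the closed-form rate
converges to `log₂(1 + E_uΓ_k/(Σ_{i≠k} E_uΓ_{ki} + (σ_RF²+σ²)τϖ_k))`. -/
theorem corollary3_power_scaling_one_over_M
    (K : ℕ) (hK : 2 ≤ K) (k : Fin K)
    (α μ : Fin K → ℝ) (β δ ρ ι κ τ σ2 σRF2 : ℝ)
    (hα : ∀ i, 0 < α i) (hμ : ∀ i, 0 < μ i)
    (hβ : 0 < β) (hδ : 0 < δ)
    (hρ : ρ ∈ Set.Ioo (0:ℝ) 1) (hι : ι ∈ Set.Ioc (0:ℝ) 1) (hκ : κ ∈ Set.Ioc (0:ℝ) 1)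
    (hτ : τ ∈ Set.Ioo (0:ℝ) 1) (hσ : 0 < σ2) (hσRF : 0 < σRF2)
    (N : ℕ) (hN : 0 < N)
    (f b : Fin K → ℂ)
    (hf_adm : ∀ i, ‖f i‖ ≤ N)
    (hb_adm : ∀ i, i ≠ k → ‖b i‖ ≤ N)
    (Eu : ℝ) (hEu : 0 < Eu) :
    Tendsto (fun M : ℕ =>
        Rtilde K k M N (fun _ => Eu/(M:ℝ)) α μ β δ ρ ι κ τ σ2 σRF2 f b)
      atTop (nhds (Real.logb 2 (1 +
        Eu * GammaK N (α k) (μ k) β δ ρ ι κ τ (f k) /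
        ((∑ i ∈ Finset.univ.erase k,
            Eu * GammaKI N (α k) (α i) (μ k) (μ i) β δ ρ ι κ τ (f k) (f i) (b i))
         + (σRF2+σ2) * τ * varpiK N (α k) (μ k) β δ (f k))))) := by
  obtain ⟨hρ0, hρ1⟩ := hρ
  obtain ⟨hι0, hι1⟩ := hι
  obtain ⟨hκ0, hκ1⟩ := hκ
  obtain ⟨hτ0, hτ1⟩ := hτ
  have hNR : (1:ℝ) ≤ (N:ℝ) := by exact_mod_cast hN
  have hδ1 : (0:ℝ) < δ + 1 := by linarith
  have hμ1 : ∀ i, (0:ℝ) < μ i + 1 := fun i => by linarith [hμ i]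
  have hρsq : ρ^2 ≤ 1 := by nlinarith
  set a := Eu * GammaK N (α k) (μ k) β δ ρ ι κ τ (f k) with ha_def
  set c := (∑ i ∈ Finset.univ.erase k,
      Eu * GammaKI N (α k) (α i) (μ k) (μ i) β δ ρ ι κ τ (f k) (f i) (b i))
    + (σRF2+σ2) * τ * varpiK N (α k) (μ k) β δ (f k) with hc_def
  set a0 := Eu * τ^2 * (β^2*(α k)^2*κ^2/((δ+1)^2*((μ k)+1)^2)) *
    (ck2 (μ k) δ ρ ι * (N:ℝ)^2 + ck3 (μ k) δ ρ ι (f k) * (N:ℝ) + ck4 (μ k) δ ρ ι (f k))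
    with ha0_def
  set d0 := (∑ i ∈ Finset.univ.erase k,
      Eu * τ^2 * (κ^2*β^2*(α k)*(α i)/((δ+1)^2*((μ k)+1)*((μ i)+1))) *
        (zki2 (μ k) (μ i) δ ρ ι * (N:ℝ)^2 + zki3 (μ k) (μ i) δ ρ ι (f k) (f i) * (N:ℝ)
          + zki4 (μ k) (μ i) δ ρ ι (f k) (f i) (b i)))
    + τ*(1-τ) * varpiK N (α k) (μ k) β δ (f k) * zetaV K N (fun _ => Eu) α μ β δ ρ κ f
    with hd0_def
  -- positivity facts
  have hvarpi : 0 < varpiK N (α k) (μ k) β δ (f k) := by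
    unfold varpiK
    apply mul_pos (div_pos (mul_pos hβ (hα k)) (mul_pos hδ1 (hμ1 k)))
    have h1 : 0 ≤ δ*(μ k)*(‖f k‖)^2 :=
      mul_nonneg (mul_nonneg hδ.le (hμ k).le) (sq_nonneg _)
    have h2 : 0 < ((μ k)+δ+1)*(N:ℝ) :=
      mul_pos (by linarith [hμ k]) (by linarith)
    linarith
  have ha_nonneg : 0 ≤ a := by
    rw [ha_def]
    apply mul_nonneg hEu.le
    unfold GammaK
    apply div_nonneg _ (by positivity)
    exact mul_nonneg (mul_nonneg (by positivity) (sq_nonneg _))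
      (ck1_nonneg N (μ k) δ ρ (f k) (hμ k) hδ hρsq hNR)
  have hc_pos : 0 < c := by
    rw [hc_def]
    apply add_pos_of_nonneg_of_pos
    · apply Finset.sum_nonneg
      intro i _
      apply mul_nonneg hEu.le
      unfold GammaKI
      apply div_nonneg
      · exact mul_nonneg (mul_nonneg (mul_nonneg (by positivity) (hα k).le) (hα i).le)
          (zki1_nonneg N (μ k) (μ i) δ ρ (f k) (f i) (b i) (hμ k) (hμ i) hδ hρsq hNR)
      · exact mul_nonneg (mul_nonneg (by positivity) (hμ1 k).le) (hμ1 i).le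
    · exact mul_pos (mul_pos (by linarith) hτ0) hvarpi
  have hLpos : (0:ℝ) < 1 + a/c := by
    have := div_nonneg ha_nonneg hc_pos.le
    linarith
  -- eventual closed form
  have heq : ∀ᶠ M : ℕ in atTop,
      Rtilde K k M N (fun _ => Eu/(M:ℝ)) α μ β δ ρ ι κ τ σ2 σRF2 f b
        = Real.logb 2 (1 + (a + a0 * ((M:ℝ))⁻¹)/(c + d0 * ((M:ℝ))⁻¹)) := by
    filter_upwards [eventually_ge_atTop 1] with M hM
    have hM0 : ((M:ℝ)) ≠ 0 := Nat.cast_ne_zero.mpr (by omega)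
    have hnum : Eu/(M:ℝ) * τ^2 * xiK M N (α k) (μ k) β δ ρ ι κ (f k)
        = (M:ℝ) * (a + a0 * ((M:ℝ))⁻¹) := by
      rw [ha_def, ha0_def]
      simp only [xiK, GammaK]
      field_simp [hM0, hδ1.ne', (hμ1 k).ne']
      ring
    have hsum : (∑ i ∈ Finset.univ.erase k,
          Eu/(M:ℝ) * τ^2 * gammaKI M N (α k) (α i) (μ k) (μ i) β δ ρ ι κ (f k) (f i) (b i))
        = (M:ℝ) * (∑ i ∈ Finset.univ.erase k,
            Eu * GammaKI N (α k) (α i) (μ k) (μ i) β δ ρ ι κ τ (f k) (f i) (b i))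
          + (∑ i ∈ Finset.univ.erase k,
              Eu * τ^2 * (κ^2*β^2*(α k)*(α i)/((δ+1)^2*((μ k)+1)*((μ i)+1))) *
                (zki2 (μ k) (μ i) δ ρ ι * (N:ℝ)^2
                  + zki3 (μ k) (μ i) δ ρ ι (f k) (f i) * (N:ℝ)
                  + zki4 (μ k) (μ i) δ ρ ι (f k) (f i) (b i))) := by
      rw [Finset.mul_sum, ← Finset.sum_add_distrib]
      refine Finset.sum_congr rfl fun i _ => ?_
      simp only [gammaKI, GammaKI]
      field_simp [hM0, hδ1.ne', (hμ1 k).ne', (hμ1 i).ne']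
      ring
    have hzeta : zetaV K N (fun _ => Eu/(M:ℝ)) α μ β δ ρ κ f * (M:ℝ)
        = zetaV K N (fun _ => Eu) α μ β δ ρ κ f := by
      simp only [zetaV]
      rw [Finset.sum_mul]
      refine Finset.sum_congr rfl fun s _ => ?_
      field_simp [hM0, hδ1.ne', (hμ1 s).ne']
    have hden : (∑ i ∈ Finset.univ.erase k,
          Eu/(M:ℝ) * τ^2 * gammaKI M N (α k) (α i) (μ k) (μ i) β δ ρ ι κ (f k) (f i) (b i))
        + τ*(1-τ) * varpiK N (α k) (μ k) β δ (f k)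
            * zetaV K N (fun _ => Eu/(M:ℝ)) α μ β δ ρ κ f * (M:ℝ)
        + τ*(σRF2+σ2) * varpiK N (α k) (μ k) β δ (f k) * (M:ℝ)
        = (M:ℝ) * (c + d0 * ((M:ℝ))⁻¹) := by
      rw [hsum, mul_assoc (τ*(1-τ) * varpiK N (α k) (μ k) β δ (f k)), hzeta,
        hc_def, hd0_def]
      rw [mul_add (M:ℝ) (_ + _) (_ * (M:ℝ)⁻¹), mul_comm _ ((M:ℝ)⁻¹), mul_inv_cancel_left₀ hM0]
      ring
    unfold Rtilde
    rw [hnum, hden, mul_div_mul_left _ _ hM0]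
  -- the limit
  have hMinv : Tendsto (fun M : ℕ => ((M:ℝ))⁻¹) atTop (nhds 0) :=
    tendsto_inv_atTop_zero.comp tendsto_natCast_atTop_atTop
  have hinner : Tendsto (fun M : ℕ => 1 + (a + a0 * ((M:ℝ))⁻¹)/(c + d0 * ((M:ℝ))⁻¹))
      atTop (nhds (1 + a/c)) := by
    apply Tendsto.const_add
    have h1 : Tendsto (fun M : ℕ => a + a0 * ((M:ℝ))⁻¹) atTop (nhds a) := by
      simpa using ((tendsto_const_nhds : Tendsto (fun _ : ℕ => a) atTop (nhds a)).add
        (hMinv.const_mul a0))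
    have h2 : Tendsto (fun M : ℕ => c + d0 * ((M:ℝ))⁻¹) atTop (nhds c) := by
      simpa using ((tendsto_const_nhds : Tendsto (fun _ : ℕ => c) atTop (nhds c)).add
        (hMinv.const_mul d0))
    exact h1.div h2 hc_pos.ne'
  have hcont : ContinuousAt (Real.logb 2) (1 + a/c) :=
    Real.continuousAt_logb hLpos.ne'
  have heq' : (fun M : ℕ => Real.logb 2 (1 + (a + a0 * ((M:ℝ))⁻¹)/(c + d0 * ((M:ℝ))⁻¹)))
      =ᶠ[atTop] (fun M : ℕ => Rtilde K k M N (fun _ => Eu/(M:ℝ)) α μ β δ ρ ι κ τ σ2 σRF2 f b) :=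
    heq.mono fun M h => h.symm
  exact Tendsto.congr' heq' (hcont.tendsto.comp hinner)

end
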